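/- For a single M/M/M cache with independent exponential inter-request time X (rate λ > 0), TTL T (rate λ_T > 0) and object fetch delay Δ (rate λ_Δ > 0), the object hit probability P_h := E[N] / (1 + E[m(Δ)] + E[N]), where E[N] := P(X < T)/(1 − P(X < T)) and E[m(Δ)] := λ·E[Δ], equals τ̄_T / (1 + τ̄_T + τ̄_Δ) = λ·λ_Δ / (λ_T·λ_Δ + λ·λ_Δ + λ·λ_T), where τ̄_T := λ/λ_T and τ̄_Δ := λ/λ_Δ. -/

import Mathlib

open MeasureTheory ProbabilityTheory

section Aux
open Real Set


lemma expMeasure_withDensity (r : ℝ) :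
    expMeasure r = volume.withDensity (exponentialPDF r) := rfl

lemma measurable_exponentialPDF (r : ℝ) : Measurable (exponentialPDF r) :=
  (measurable_exponentialPDFReal r).ennreal_ofReal

lemma expMeasure_Iio_zero {r : ℝ} : expMeasure r (Iio 0) = 0 := by
  rw [expMeasure_withDensity, withDensity_apply _ measurableSet_Iio]
  exact lintegral_exponentialPDF_of_nonpos le_rfl

lemma expMeasure_ae_nonneg {r : ℝ} : ∀ᵐ x ∂(expMeasure r), 0 ≤ x := by
  rw [ae_iff]
  refine measure_mono_null (fun x hx => ?_) expMeasure_Iio_zero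
  simpa using not_le.mp (by simpa using hx)

lemma integral_id_expMeasure {r : ℝ} (hr : 0 < r) : ∫ x, x ∂(expMeasure r) = 1 / r := by
  have h0 : 0 ≤ᵐ[expMeasure r] (fun x : ℝ => x) := expMeasure_ae_nonneg
  rw [show (∫ x, x ∂(expMeasure r)) = ∫ x, (fun y : ℝ => y) x ∂(expMeasure r) from rfl,
    integral_eq_lintegral_of_nonneg_ae h0 aestronglyMeasurable_id]
  rw [expMeasure_withDensity,
    lintegral_withDensity_eq_lintegral_mul _ (measurable_exponentialPDF r)
      ENNReal.measurable_ofReal]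
  have hfun : (fun x => (exponentialPDF r * ENNReal.ofReal) x)
      = Set.indicator (Ioi 0) (fun x => ENNReal.ofReal (x * (r * rexp (-(r * x))))) := by
    ext x
    rcases lt_trichotomy x 0 with h | h | h
    · rw [Set.indicator_of_notMem (by simpa using h.le), Pi.mul_apply,
        exponentialPDF_of_neg h, zero_mul]
    · simp [h]
    · rw [Set.indicator_of_mem (mem_Ioi.mpr h), Pi.mul_apply, exponentialPDF_of_nonneg h.le,
        ← ENNReal.ofReal_mul (by positivity)]
      congr 1
      ring
  rw [hfun, lintegral_indicator measurableSet_Ioi]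
  have base : IntegrableOn (fun x : ℝ => x * rexp (-(r * x))) (Ioi 0) := by
    have := integrableOn_rpow_mul_exp_neg_mul_rpow (p := 1) (s := 1) (b := r)
      (by norm_num) (by norm_num) hr
    refine (this.congr_fun (fun x hx => ?_) measurableSet_Ioi)
    simp only [rpow_one, neg_mul]
  have hint : IntegrableOn (fun x : ℝ => x * (r * rexp (-(r * x)))) (Ioi 0) :=
    (base.const_mul r).congr (Filter.Eventually.of_forall fun x => by ring)
  rw [← ofReal_integral_eq_lintegral_ofReal hint]
  · rw [ENNReal.toReal_ofReal (setIntegral_nonneg measurableSet_Ioi fun x hx =>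
      mul_nonneg (le_of_lt hx) (by positivity))]
    have : ∫ x in Ioi 0, x * (r * rexp (-(r * x))) =
        r * ∫ x in Ioi 0, x ^ ((2:ℝ) - 1) * rexp (-(r * x)) := by
      rw [← integral_const_mul]
      refine setIntegral_congr_fun measurableSet_Ioi (fun x hx => ?_)
      rw [show (2:ℝ) - 1 = 1 by norm_num, rpow_one]
      ring
    rw [this, integral_rpow_mul_exp_neg_mul_Ioi (by norm_num) hr, Real.Gamma_two]
    rw [show ((2:ℝ)) = ((2:ℕ):ℝ) by norm_num, rpow_natCast]
    field_simp
  · exact ae_restrict_of_forall_mem measurableSet_Ioi fun x hx =>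
      mul_nonneg (le_of_lt hx) (by positivity)

lemma expMeasure_Ioi {r : ℝ} (hr : 0 < r) {x : ℝ} (hx : 0 ≤ x) :
    expMeasure r (Ioi x) = ENNReal.ofReal (rexp (-(r * x))) := by
  have : IsProbabilityMeasure (expMeasure r) := isProbabilityMeasure_expMeasure hr
  have hIic : expMeasure r (Iic x) = ENNReal.ofReal (1 - rexp (-(r * x))) := by
    rw [expMeasure_withDensity, withDensity_apply _ measurableSet_Iic,
      lintegral_exponentialPDF_eq_antiDeriv hr, if_pos hx]
  have he1 : rexp (-(r * x)) ≤ 1 := exp_le_one_iff.mpr (by nlinarith)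
  rw [show Ioi x = (Iic x)ᶜ from (compl_Iic).symm,
    measure_compl measurableSet_Iic (measure_ne_top _ _), measure_univ, hIic]
  refine (ENNReal.eq_sub_of_add_eq ENNReal.ofReal_ne_top ?_).symm
  rw [← ENNReal.ofReal_add (by positivity) (by linarith), ← ENNReal.ofReal_one]
  congr 1
  ring

lemma prod_expMeasure_lt {a b : ℝ} (ha : 0 < a) (hb : 0 < b) :
    ((expMeasure a).prod (expMeasure b)) {p : ℝ × ℝ | p.1 < p.2}
      = ENNReal.ofReal (a / (a + b)) := by
  have : IsProbabilityMeasure (expMeasure a) := isProbabilityMeasure_expMeasure ha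
  have : IsProbabilityMeasure (expMeasure b) := isProbabilityMeasure_expMeasure hb
  rw [Measure.prod_apply (measurableSet_lt measurable_fst measurable_snd)]
  have h1 : ∀ x : ℝ, Prod.mk x ⁻¹' {p : ℝ × ℝ | p.1 < p.2} = Ioi x := fun x => rfl
  simp only [h1]
  have hae : (fun x => expMeasure b (Ioi x)) =ᵐ[expMeasure a]
      fun x => ENNReal.ofReal (rexp (-(b * x))) := by
    filter_upwards [expMeasure_ae_nonneg] with x hx
    exact expMeasure_Ioi hb hx
  have hab : a + b ≠ 0 := by positivity
  rw [lintegral_congr_ae hae, expMeasure_withDensity,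
    lintegral_withDensity_eq_lintegral_mul _ (measurable_exponentialPDF a)
      (by fun_prop)]
  have hfun : (fun x => (exponentialPDF a * fun x => ENNReal.ofReal (rexp (-(b * x)))) x)
      = fun x => ENNReal.ofReal (a / (a + b)) * exponentialPDF (a + b) x := by
    ext x
    rcases le_or_gt 0 x with h | h
    · rw [Pi.mul_apply, exponentialPDF_of_nonneg h, exponentialPDF_of_nonneg h,
        ← ENNReal.ofReal_mul (by positivity), ← ENNReal.ofReal_mul (by positivity)]
      rw [mul_assoc, ← Real.exp_add, ← mul_assoc, div_mul_cancel₀ a hab]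
      congr 2
      ring
    · rw [Pi.mul_apply, exponentialPDF_of_neg h, exponentialPDF_of_neg h, zero_mul, mul_zero]
  rw [hfun, lintegral_const_mul _ (measurable_exponentialPDF _),
    lintegral_exponentialPDF_eq_one (by linarith), mul_one]


end Aux

/-- For a single M/M/M TTL cache (exponential inter-request time `X` with rate `lam`,
exponential TTL `T` with rate `lamT`, exponential object fetch delay `Δ` with rate `lamD`,
all independent), the object hit probability
`P_h = E[N]/(1 + E[m(Δ)] + E[N])`, with `E[N] = P(X < T)/(1 - P(X < T))` and
`E[m(Δ)] = lam * E[Δ]`, equals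
`τ̄_T / (1 + τ̄_T + τ̄_Δ) = lam*lamD / (lamT*lamD + lam*lamD + lam*lamT)`. -/
theorem hit_probability_single_MMM_cache
    {Ω : Type*} [MeasurableSpace Ω] (μ : Measure Ω) [IsProbabilityMeasure μ]
    (X T Δ : Ω → ℝ) (lam lamT lamD : ℝ)
    (hlam : 0 < lam) (hlamT : 0 < lamT) (hlamD : 0 < lamD)
    (hmX : Measurable X) (hmT : Measurable T) (hmΔ : Measurable Δ)
    (hX : μ.map X = expMeasure lam)
    (hT : μ.map T = expMeasure lamT)
    (hΔ : μ.map Δ = expMeasure lamD)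
    (hindep : iIndepFun ![X, T, Δ] μ)
    (p EN Em Ph : ℝ)
    (hp : p = (μ {ω | X ω < T ω}).toReal)
    (hEN : EN = p / (1 - p))
    (hEm : Em = lam * ∫ ω, Δ ω ∂μ)
    (hPh : Ph = EN / (1 + Em + EN)) :
    Ph = (lam / lamT) / (1 + lam / lamT + lam / lamD) ∧
      Ph = lam * lamD / (lamT * lamD + lam * lamD + lam * lamT) := by
  have hIT : IndepFun X T μ := by
    have h := hindep.indepFun (show (0 : Fin 3) ≠ 1 by decide)
    simpa using h
  have hmap : μ.map (fun ω => (X ω, T ω)) = (expMeasure lam).prod (expMeasure lamT) := by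
    rw [← hX, ← hT]
    exact (indepFun_iff_map_prod_eq_prod_map_map hmX.aemeasurable hmT.aemeasurable).mp hIT
  have hs : MeasurableSet {q : ℝ × ℝ | q.1 < q.2} :=
    measurableSet_lt measurable_fst measurable_snd
  have hplt : μ {ω | X ω < T ω} = ENNReal.ofReal (lam / (lam + lamT)) := by
    have h2 : μ {ω | X ω < T ω} = (μ.map (fun ω => (X ω, T ω))) {q : ℝ × ℝ | q.1 < q.2} := by
      rw [Measure.map_apply (hmX.prodMk hmT) hs]
      rfl
    rw [h2, hmap, prod_expMeasure_lt hlam hlamT]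
  have hpv : p = lam / (lam + lamT) := by
    rw [hp, hplt, ENNReal.toReal_ofReal (by positivity)]
  have hInt : ∫ ω, Δ ω ∂μ = 1 / lamD := by
    have h3 : ∫ ω, Δ ω ∂μ = ∫ x, x ∂(μ.map Δ) :=
      (integral_map hmΔ.aemeasurable measurable_id.aestronglyMeasurable).symm
    rw [h3, hΔ, integral_id_expMeasure hlamD]
  have hlt : lam + lamT ≠ 0 := by positivity
  have hENv : EN = lam / lamT := by
    rw [hEN, hpv, show (1:ℝ) - lam / (lam + lamT) = lamT / (lam + lamT) by field_simp; ring,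
      div_div_div_cancel_right₀]
    exact hlt
  have hEmv : Em = lam / lamD := by rw [hEm, hInt]; ring
  have hden : (0:ℝ) < 1 + lam / lamD + lam / lamT := by positivity
  constructor
  · rw [hPh, hENv, hEmv]
    field_simp
    ring
  · rw [hPh, hENv, hEmv]
    field_simp
    ring
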